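/- For real numbers b ≥ a > 0, the sum over all integers n of log((n² + b²)/(n² + a²)) equals 2π(b − a) − 2·log((1 − e^{−2πa})/(1 − e^{−2πb})). -/
import Mathlib


open Real

open Filter Finset Topology

lemma euler_sinh_prod (x : ℝ) (hx : 0 < x) :
    Tendsto (fun n : ℕ => ∏ j ∈ Finset.range n, (1 + x ^ 2 / ((j : ℝ) + 1) ^ 2)) atTop
      (𝓝 (Real.sinh (π * x) / (π * x))) := by
  have hc : (↑π * (x : ℂ) * Complex.I) ≠ 0 := by
    simp [Real.pi_ne_zero, Complex.I_ne_zero, hx.ne', Complex.ofReal_ne_zero]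
  have h := (Complex.tendsto_euler_sin_prod ((x : ℂ) * Complex.I)).div_const
      (↑π * (x : ℂ) * Complex.I)
  have hlim : Complex.sin (↑π * ((x : ℂ) * Complex.I)) / (↑π * (x : ℂ) * Complex.I)
      = ((Real.sinh (π * x) / (π * x) : ℝ) : ℂ) := by
    rw [show (↑π * ((x : ℂ) * Complex.I)) = (↑(π * x) : ℂ) * Complex.I by push_cast; ring,
      Complex.sin_mul_I]
    rw [mul_div_mul_right _ _ Complex.I_ne_zero] at *
    · rw [← Complex.ofReal_sinh]
      push_cast
      ring
  rw [hlim] at h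
  have h2 := (Complex.continuous_re.tendsto _).comp h
  simp only [Complex.ofReal_re] at h2
  convert h2 using 2 with n
  rw [Function.comp_apply, mul_comm (↑π * (↑x * Complex.I)), mul_div_assoc,
    show (↑π * ((x:ℂ) * Complex.I)) = ↑π * x * Complex.I from (mul_assoc _ _ _).symm,
    div_self hc, mul_one]
  have : (∏ j ∈ Finset.range n, ((1:ℂ) - ((x:ℂ) * Complex.I) ^ 2 / ((j : ℂ) + 1) ^ 2))
      = ((∏ j ∈ Finset.range n, (1 + x ^ 2 / ((j : ℝ) + 1) ^ 2) : ℝ) : ℂ) := by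
    push_cast
    apply Finset.prod_congr rfl
    intro j _
    rw [mul_pow, Complex.I_sq]
    ring
  rw [this, Complex.ofReal_re]

lemma hasSum_log_one_add (x : ℝ) (hx : 0 < x) :
    HasSum (fun n : ℕ => Real.log (1 + x ^ 2 / ((n : ℝ) + 1) ^ 2))
      (Real.log (Real.sinh (π * x) / (π * x))) := by
  have hpos : ∀ n : ℕ, (0:ℝ) < 1 + x ^ 2 / ((n:ℝ) + 1) ^ 2 := fun n => by positivity
  rw [hasSum_iff_tendsto_nat_of_nonneg
    (fun i => Real.log_nonneg (le_add_of_nonneg_right (by positivity)))]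
  have hL : 0 < Real.sinh (π * x) / (π * x) :=
    div_pos (Real.sinh_pos_iff.2 (by positivity)) (by positivity)
  have h2 := ((Real.continuousAt_log hL.ne').tendsto).comp (euler_sinh_prod x hx)
  refine h2.congr fun n => ?_
  rw [Function.comp_apply, Real.log_prod]
  exact fun j _ => (hpos j).ne'

theorem sum_log_ratio_int (a b : ℝ) (ha : 0 < a) (hab : a ≤ b) :
    ∑' n : ℤ, Real.log (((n : ℝ) ^ 2 + b ^ 2) / ((n : ℝ) ^ 2 + a ^ 2)) =
      2 * π * (b - a) -
        2 * Real.log ((1 - Real.exp (-2 * π * a)) / (1 - Real.exp (-2 * π * b))) := by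
  have hb : 0 < b := ha.trans_le hab
  set f : ℤ → ℝ := fun n => Real.log (((n : ℝ) ^ 2 + b ^ 2) / ((n : ℝ) ^ 2 + a ^ 2)) with hf
  set T : ℝ := Real.log (Real.sinh (π * b) / (π * b)) - Real.log (Real.sinh (π * a) / (π * a))
    with hT
  -- the shifted terms
  have hshift : ∀ n : ℕ, f ((n : ℤ) + 1)
      = Real.log (1 + b ^ 2 / ((n:ℝ)+1) ^ 2) - Real.log (1 + a ^ 2 / ((n:ℝ)+1) ^ 2) := by
    intro n
    have hk : (0:ℝ) < ((n:ℝ)+1) := by positivity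
    have h1 : (0:ℝ) < 1 + b ^ 2 / ((n:ℝ)+1) ^ 2 := by positivity
    have h2 : (0:ℝ) < 1 + a ^ 2 / ((n:ℝ)+1) ^ 2 := by positivity
    have : ((((n : ℤ) + 1 : ℤ) : ℝ) ^ 2 + b ^ 2) / ((((n : ℤ) + 1 : ℤ) : ℝ) ^ 2 + a ^ 2)
        = (1 + b ^ 2 / ((n:ℝ)+1) ^ 2) / (1 + a ^ 2 / ((n:ℝ)+1) ^ 2) := by
      push_cast
      field_simp
    rw [hf]
    simp only []
    rw [this, Real.log_div h1.ne' h2.ne']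
  have hfeven : ∀ m : ℤ, f (-m) = f m := by
    intro m
    simp only [hf, Int.cast_neg, neg_sq]
  have hsumShift : HasSum (fun n : ℕ => f ((n : ℤ) + 1)) T := by
    rw [hT]
    simp only [hshift]
    exact (hasSum_log_one_add b hb).sub (hasSum_log_one_add a ha)
  have hsumNat : HasSum (fun n : ℕ => f n) (T + f 0) := by
    have h1 : HasSum (fun n : ℕ => f (((n + 1 : ℕ) : ℤ))) T := by
      have he : (fun n : ℕ => f (((n + 1 : ℕ) : ℤ))) = fun n : ℕ => f ((n : ℤ) + 1) := by
        funext n; norm_num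
      rw [he]; exact hsumShift
    have := (hasSum_nat_add_iff (f := fun n : ℕ => f n) 1).mp h1
    simpa using this
  have hsumNeg : HasSum (fun n : ℕ => f (-((n : ℤ) + 1))) T := by
    simp only [hfeven]
    exact hsumShift
  have hZ : HasSum f ((T + f 0) + T) := HasSum.of_nat_of_neg_add_one hsumNat hsumNeg
  rw [hZ.tsum_eq]
  -- now arithmetic
  have hEa : 0 < 1 - Real.exp (-2 * π * a) := by
    have : Real.exp (-2 * π * a) < 1 := Real.exp_lt_one_iff.mpr (by nlinarith [Real.pi_pos])
    linarith
  have hEb : 0 < 1 - Real.exp (-2 * π * b) := by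
    have : Real.exp (-2 * π * b) < 1 := Real.exp_lt_one_iff.mpr (by nlinarith [Real.pi_pos])
    linarith
  have hsinh : ∀ x : ℝ, Real.sinh (π * x) = Real.exp (π * x) * (1 - Real.exp (-2 * π * x)) / 2 := by
    intro x
    rw [Real.sinh_eq]
    have : Real.exp (π * x) * Real.exp (-2 * π * x) = Real.exp (-(π * x)) := by
      rw [← Real.exp_add]; congr 1; ring
    nlinarith [this]
  have hlogsinh : ∀ x : ℝ, 0 < x →
      Real.log (Real.sinh (π * x)) = π * x + Real.log (1 - Real.exp (-2 * π * x)) - Real.log 2 := by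
    intro x hx
    have hE : 0 < 1 - Real.exp (-2 * π * x) := by
      have : Real.exp (-2 * π * x) < 1 := Real.exp_lt_one_iff.mpr (by nlinarith [Real.pi_pos])
      linarith
    rw [hsinh x, Real.log_div (by positivity) two_ne_zero,
      Real.log_mul (Real.exp_ne_zero _) hE.ne', Real.log_exp]
  have hf0 : f 0 = 2 * Real.log b - 2 * Real.log a := by
    rw [hf]
    norm_num
    rw [Real.log_div (by positivity) (by positivity), Real.log_pow, Real.log_pow]
    push_cast; ring
  have hTa : Real.log (Real.sinh (π * a) / (π * a))
      = π * a + Real.log (1 - Real.exp (-2 * π * a)) - Real.log 2 - Real.log π - Real.log a := by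
    rw [Real.log_div (Real.sinh_pos_iff.2 (by positivity)).ne' (by positivity),
      Real.log_mul Real.pi_ne_zero ha.ne', hlogsinh a ha]
    ring
  have hTb : Real.log (Real.sinh (π * b) / (π * b))
      = π * b + Real.log (1 - Real.exp (-2 * π * b)) - Real.log 2 - Real.log π - Real.log b := by
    rw [Real.log_div (Real.sinh_pos_iff.2 (by positivity)).ne' (by positivity),
      Real.log_mul Real.pi_ne_zero hb.ne', hlogsinh b hb]
    ring
  rw [hT, hTa, hTb, hf0, Real.log_div hEa.ne' hEb.ne']
  ring
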